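/- For all nonnegative integers k and m, the sum over j of (-1)^j * C(k,j) * β_{m+j} plus the sum over j of (-1)^j * C(m,j) * β_{k+j} equals -k!·m!/(k+m+1)!, where β_n := ζ(-n) = (-1)^n B_{n+1}/(n+1) and each sum runs over 0 ≤ j ≤ k and 0 ≤ j ≤ m respectively. -/

import Mathlib

open Finset

/-- β_m := ζ(-m) = (-1)^m B_{m+1}/(m+1), with the convention B₁ = -1/2. -/
noncomputable def beta (m : ℕ) : ℚ := (-1 : ℚ)^m * bernoulli (m+1) / (m+1)

open Polynomial

/-- The umbral Bernoulli functional: `X^n ↦ bernoulli n`. -/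
noncomputable def Eb : ℚ[X] →ₗ[ℚ] ℚ where
  toFun p := p.sum fun n a => a * _root_.bernoulli n
  map_add' p q := Polynomial.sum_add_index p q _ (fun _ => zero_mul _)
    (fun _ a b => add_mul a b _)
  map_smul' c p := by
    simp only [RingHom.id_apply, smul_eq_mul]
    rw [Polynomial.sum_smul_index p c (fun n a => a * _root_.bernoulli n)
      (fun _ => zero_mul _)]
    simp only [Polynomial.sum, Finset.mul_sum, mul_assoc]

@[simp] lemma Eb_C_mul_X_pow (c : ℚ) (n : ℕ) : Eb (C c * X ^ n) = c * _root_.bernoulli n := by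
  rw [C_mul_X_pow_eq_monomial]
  show (Polynomial.monomial n c).sum (fun n a => a * _root_.bernoulli n) = _
  exact Polynomial.sum_monomial_index c _ (zero_mul _)

@[simp] lemma Eb_C (c : ℚ) : Eb (C c) = c := by
  simpa using Eb_C_mul_X_pow c 0

lemma neg_one_pow_mul_bernoulli (n : ℕ) :
    (-1 : ℚ)^n * ((if n = 1 then (1:ℚ) else 0) + _root_.bernoulli n) = _root_.bernoulli n := by
  rcases eq_or_ne n 1 with rfl | h
  · norm_num
  · rw [if_neg h, zero_add]
    have hb : _root_.bernoulli n = (-1 : ℚ)^n * _root_.bernoulli n := by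
      conv_lhs => rw [bernoulli_eq_bernoulli'_of_ne_one h, bernoulli'_eq_bernoulli]
    exact hb.symm

lemma Eb_comp_neg (p : ℚ[X]) : Eb (p.comp (-1 - X)) = Eb p := by
  induction p using Polynomial.induction_on' with
  | add p q hp hq => rw [add_comp, map_add, map_add, hp, hq]
  | monomial n a =>
    rw [monomial_comp, ← C_mul_X_pow_eq_monomial, Eb_C_mul_X_pow]
    have h1 : (-1 - X : ℚ[X]) = -(X + 1) := by ring
    have h2 : ((X : ℚ[X]) + 1) ^ n = ∑ i ∈ range (n + 1), C ((n.choose i : ℚ)) * X ^ i := by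
      rw [add_pow]
      refine Finset.sum_congr rfl fun i _ => ?_
      simp [mul_comm]
    have h3 : Eb (((X : ℚ[X]) + 1) ^ n) = _root_.bernoulli n + (if n = 1 then (1:ℚ) else 0) := by
      rw [h2, map_sum]
      simp only [Eb_C_mul_X_pow]
      rw [Finset.sum_range_succ, _root_.sum_bernoulli, Nat.choose_self]
      push_cast
      ring
    have h4 : (C a * (-1 - X) ^ n : ℚ[X]) = ((-1:ℚ)^n * a) • ((X + 1) ^ n) := by
      rw [h1, neg_pow, Polynomial.smul_eq_C_mul, map_mul, map_pow, map_neg, map_one]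
      ring
    rw [h4, map_smul, h3, smul_eq_mul]
    rw [mul_comm ((-1:ℚ)^n) a, mul_assoc]
    rw [add_comm] at h3 ⊢
    rw [neg_one_pow_mul_bernoulli n]

/-- `Qp k m` is the antiderivative of `X^m (1-X)^k` reflected suitably. -/
noncomputable def Qp (k m : ℕ) : ℚ[X] :=
  ∑ j ∈ range (k+1), C ((-1:ℚ)^j * (k.choose j) / (m+j+1)) * X ^ (m+j+1)

lemma Qp_eval_zero (k m : ℕ) : (Qp k m).eval 0 = 0 := by
  simp [Qp, eval_finset_sum]

lemma one_sub_X_pow (k : ℕ) :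
    ((1 : ℚ[X]) - X) ^ k = ∑ j ∈ range (k+1), C ((-1:ℚ)^j * (k.choose j)) * X ^ j := by
  have h : ((1 : ℚ[X]) - X) = -X + 1 := by ring
  rw [h, add_pow]
  refine Finset.sum_congr rfl fun j _ => ?_
  rw [map_mul, map_pow, map_neg, map_one, neg_pow, C_eq_natCast]
  ring

lemma Qp_derivative (k m : ℕ) :
    derivative (Qp k m) = X ^ m * (1 - X) ^ k := by
  rw [Qp, map_sum, one_sub_X_pow, Finset.mul_sum]
  refine Finset.sum_congr rfl fun j _ => ?_
  rw [derivative_C_mul_X_pow]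
  have he : (m + j + 1) - 1 = m + j := rfl
  have hc : (-1:ℚ)^j * (k.choose j) / ((m:ℚ) + j + 1) * ((m + j + 1 : ℕ) : ℚ)
      = (-1:ℚ)^j * (k.choose j) := by
    have hne : ((m : ℚ) + j + 1) ≠ 0 := by positivity
    push_cast
    field_simp
  rw [he, hc, pow_add]
  ring

lemma Qp_reflect (k m : ℕ) :
    Qp m k = C ((Qp k m).eval 1) - (Qp k m).comp (1 - X) := by
  have hd : derivative (C ((Qp k m).eval 1) - (Qp k m).comp (1 - X) - Qp m k) = 0 := by
    rw [map_sub, map_sub, derivative_C, derivative_comp_one_sub_X, Qp_derivative,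
      Qp_derivative]
    simp only [mul_comp, pow_comp, sub_comp, X_comp, one_comp]
    ring_nf
  have h := eq_C_of_derivative_eq_zero hd
  rw [coeff_zero_eq_eval_zero] at h
  simp only [eval_sub, eval_C, eval_comp, eval_sub, eval_one, eval_X, sub_zero,
    Qp_eval_zero] at h
  norm_num at h
  linear_combination (norm := ring_nf) -h

lemma alt_sum_pascal (f : ℕ → ℚ) (k m : ℕ) :
    ∑ j ∈ range (k+2), (-1:ℚ)^j * ((k+1).choose j) * f (m+j)
      = ∑ j ∈ range (k+1), (-1:ℚ)^j * (k.choose j) * f (m+j)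
        - ∑ j ∈ range (k+1), (-1:ℚ)^j * (k.choose j) * f ((m+1)+j) := by
  rw [Finset.sum_range_succ' _ (k+1)]
  have h1 : ∀ i ∈ range (k+1), (-1:ℚ)^(i+1) * (((k+1).choose (i+1) : ℕ) : ℚ) * f (m+(i+1))
      = -((-1:ℚ)^i * (k.choose i) * f ((m+1)+i))
        + (-1:ℚ)^(i+1) * (k.choose (i+1)) * f ((m+1)+i) := by
    intro i _
    have e1 : m + (i+1) = (m+1) + i := by omega
    rw [Nat.choose_succ_succ, e1]
    push_cast
    ring
  rw [Finset.sum_congr rfl h1, Finset.sum_add_distrib]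
  have h2 : ∑ i ∈ range (k+1), -((-1:ℚ)^i * (k.choose i) * f ((m+1)+i))
      = -∑ j ∈ range (k+1), (-1:ℚ)^j * (k.choose j) * f ((m+1)+j) := by
    rw [← Finset.sum_neg_distrib]
  have h3 : (∑ i ∈ range (k+1), (-1:ℚ)^(i+1) * (k.choose (i+1)) * f ((m+1)+i))
        + (-1:ℚ)^0 * (((k+1).choose 0 : ℕ) : ℚ) * f (m+0)
      = ∑ j ∈ range (k+1), (-1:ℚ)^j * (k.choose j) * f (m+j) := by
    have e := Finset.sum_range_succ' (fun j => (-1:ℚ)^j * (k.choose j) * f (m+j)) (k+1)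
    have e' := Finset.sum_range_succ (fun j => (-1:ℚ)^j * (k.choose j) * f (m+j)) (k+1)
    simp only [Nat.choose_succ_self, Nat.cast_zero, mul_zero, zero_mul, add_zero] at e'
    rw [e'] at e
    have e2 : ∀ i ∈ range (k+1),
        (-1:ℚ)^(i+1) * (k.choose (i+1)) * f (m+(i+1))
          = (-1:ℚ)^(i+1) * (k.choose (i+1)) * f ((m+1)+i) := by
      intro i _
      have : m + (i+1) = (m+1) + i := by omega
      rw [this]
    rw [← Finset.sum_congr rfl e2]
    simpa using e.symm
  rw [h2] at *
  push_cast at h3 ⊢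
  linarith [h3]

lemma S_val (k : ℕ) : ∀ m : ℕ,
    ∑ j ∈ range (k+1), (-1:ℚ)^j * (k.choose j) * (((m+j : ℕ) : ℚ)+1)⁻¹
      = (k.factorial : ℚ) * m.factorial / (k+m+1).factorial := by
  induction k with
  | zero =>
    intro m
    rw [Finset.sum_range_one]
    have : 0+m+1 = m+1 := by omega
    rw [this, Nat.factorial_succ]
    have hm : ((m:ℚ)+1) ≠ 0 := by positivity
    have hf : ((m.factorial : ℚ)) ≠ 0 := by positivity
    push_cast
    field_simp
    simp
  | succ k ih =>
    intro m
    rw [alt_sum_pascal (fun n => ((n : ℚ)+1)⁻¹) k m, ih m, ih (m+1)]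
    have h4 : ((k+1+m+1).factorial : ℚ) = (k+m+2) * (k+m+1).factorial := by
      have : k+1+m+1 = (k+m+1)+1 := by ring
      rw [this, Nat.factorial_succ]
      push_cast
      ring
    have h5 : ((k+(m+1)+1).factorial : ℚ) = (k+m+2) * (k+m+1).factorial := by
      have : k+(m+1)+1 = (k+m+1)+1 := by ring
      rw [this, Nat.factorial_succ]
      push_cast
      ring
    rw [h4, h5, Nat.factorial_succ k, Nat.factorial_succ m]
    have hfac : ((k+m+1).factorial : ℚ) ≠ 0 := by positivity
    have hmf : ((m.factorial : ℚ)) ≠ 0 := by positivity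
    have hkm : ((k:ℚ)+m+2) ≠ 0 := by positivity
    field_simp
    push_cast
    ring

lemma Qp_eval_one (k m : ℕ) :
    (Qp k m).eval 1 = (k.factorial : ℚ) * m.factorial / (k+m+1).factorial := by
  rw [Qp, ← S_val k m, eval_finset_sum]
  refine Finset.sum_congr rfl fun j _ => ?_
  simp only [eval_mul, eval_C, eval_pow, eval_X, one_pow, mul_one]
  push_cast
  ring

lemma sum_beta_eq (k m : ℕ) :
    ∑ j ∈ range (k+1), (-1:ℚ)^j * (k.choose j) * beta (m+j)
      = -Eb ((Qp k m).comp (-X)) := by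
  rw [Qp, Polynomial.sum_comp, map_sum, ← Finset.sum_neg_distrib]
  refine Finset.sum_congr rfl fun j _ => ?_
  have hpow : ((-X : ℚ[X])) ^ (m+j+1) = C ((-1:ℚ)^(m+j+1)) * X ^ (m+j+1) := by
    rw [neg_pow, map_pow, map_neg, map_one]
  rw [mul_comp, C_comp, pow_comp, X_comp, hpow, ← mul_assoc, ← map_mul, Eb_C_mul_X_pow, beta]
  push_cast
  ring

theorem saalschutz_reciprocity (k m : ℕ) :
    (∑ j ∈ range (k+1), (-1 : ℚ)^j * (k.choose j) * beta (m+j))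
      + (∑ j ∈ range (m+1), (-1 : ℚ)^j * (m.choose j) * beta (k+j))
      = -((k.factorial : ℚ) * (m.factorial) / ((k+m+1).factorial)) := by
  rw [sum_beta_eq k m, sum_beta_eq m k]
  have hc : (Qp m k).comp (-X) = C ((Qp k m).eval 1) - (Qp k m).comp (1 + X) := by
    rw [Qp_reflect k m, sub_comp, C_comp, comp_assoc]
    congr 2
    simp [sub_comp]
  have he : Eb ((Qp k m).comp (1 + X)) = Eb ((Qp k m).comp (-X)) := by
    have h := Eb_comp_neg ((Qp k m).comp (1 + X))
    rw [comp_assoc] at h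
    have harg : ((1 : ℚ[X]) + X).comp (-1 - X) = -X := by
      simp [add_comp]
      ring
    rw [harg] at h
    exact h.symm
  rw [hc, map_sub, he, Eb_C, Qp_eval_one]
  have hkm : k + m = m + k := by ring
  rw [hkm] at *
  ring
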